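/- Let K be a field, S = K[x_1,…,x_n], and let I ⊆ S be an LP-polymatroidal ideal. Then every associated prime ideal of S/I is of the form P_{[s,t]} = (x_s, x_{s+1}, …, x_t) for some 1 ≤ s ≤ t ≤ n. -/

import Mathlib

open Finset MvPolynomial
open scoped Pointwise

namespace LPaux

variable {n : ℕ} {K : Type*} [Field K]

/-! ### Interval arithmetic helpers on `Fin n` -/

lemma Iic_eq_union {j i : Fin n} (h : j ≤ i) : Iic i = Iic j ∪ Ioc j i := by
  ext x
  simp only [mem_Iic, mem_union, mem_Ioc]
  constructor
  · intro hx
    rcases le_or_gt x j with h' | h'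
    · exact Or.inl h'
    · exact Or.inr ⟨h', hx⟩
  · rintro (h' | ⟨-, h'⟩)
    exacts [h'.trans h, h']

lemma sum_Iic_split (m : Fin n → ℕ) {j i : Fin n} (h : j ≤ i) :
    ∑ k ∈ Iic i, m k = (∑ k ∈ Iic j, m k) + ∑ k ∈ Ioc j i, m k := by
  rw [Iic_eq_union h, Finset.sum_union]
  rw [Finset.disjoint_left]
  intro x hx hx2
  rw [mem_Iic] at hx
  rw [mem_Ioc] at hx2
  exact absurd hx2.1 (not_lt.mpr hx)

lemma Iic_succ_insert {i i' : Fin n} (h : (i' : ℕ) = (i : ℕ) + 1) :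
    Iic i' = insert i' (Iic i) := by
  ext x
  simp only [mem_Iic, mem_insert, Fin.le_def, Fin.ext_iff, h]
  omega

lemma Ioc_succ_insert {j i i' : Fin n} (h : (i' : ℕ) = (i : ℕ) + 1) (hj : j ≤ i) :
    Ioc j i' = insert i' (Ioc j i) := by
  have hj' := Fin.le_def.mp hj
  ext x
  simp only [mem_Ioc, mem_insert, Fin.le_def, Fin.lt_def, Fin.ext_iff, h]
  omega

lemma univ_eq_Iic_top {i : Fin n} (h : (i : ℕ) = n - 1) :
    (univ : Finset (Fin n)) = Iic i := by
  ext x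
  simp only [mem_univ, mem_Iic, Fin.le_def, h, true_iff]
  have := x.isLt; omega

/-! ### The generator set and divisibility -/

/-- The exponent vectors of the generators of the LP-polymatroidal ideal. -/
def Gset (d : ℕ) (α β : Fin n → ℕ) : Set (Fin n →₀ ℕ) :=
  {v | (∑ i, v i = d) ∧ ∀ i : Fin n, (i : ℕ) < n - 1 →
     α i ≤ ∑ j ∈ Iic i, v j ∧ (∑ j ∈ Iic i, v j) ≤ β i}

/-- `x^u` is divisible by some generator. -/
def Div (d : ℕ) (α β : Fin n → ℕ) (u : Fin n →₀ ℕ) : Prop :=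
  ∃ v ∈ Gset d α β, v ≤ u

/-- Hall-type feasibility condition for existence of a generator below `m`. -/
def Fcond (d : ℕ) (α β : Fin n → ℕ) (m : Fin n →₀ ℕ) : Prop :=
  (∀ i : Fin n, α i ≤ ∑ k ∈ Iic i, m k) ∧
  ∀ j i : Fin n, j < i → α i ≤ β j + ∑ k ∈ Ioc j i, m k

section Comb

variable {d : ℕ} {α β : Fin n → ℕ}

lemma Gbounds (hlast : ∀ i : Fin n, (i : ℕ) = n - 1 → α i = d ∧ β i = d)
    {v : Fin n →₀ ℕ} (hv : v ∈ Gset d α β) (i : Fin n) :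
    α i ≤ ∑ j ∈ Iic i, v j ∧ (∑ j ∈ Iic i, v j) ≤ β i := by
  rcases lt_or_ge (i : ℕ) (n - 1) with h | h
  · exact hv.2 i h
  · have hi : (i : ℕ) = n - 1 := le_antisymm (by have := i.isLt; omega) h
    have h1 := hlast i hi
    rw [← univ_eq_Iic_top hi, hv.1, h1.1, h1.2]
    exact ⟨le_rfl, le_rfl⟩

lemma Div.fcond (hlast : ∀ i : Fin n, (i : ℕ) = n - 1 → α i = d ∧ β i = d)
    {m : Fin n →₀ ℕ} (h : Div d α β m) : Fcond d α β m := by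
  obtain ⟨v, hv, hvm⟩ := h
  have hvm' : ∀ k, v k ≤ m k := fun k => hvm k
  constructor
  · intro i
    exact (Gbounds hlast hv i).1.trans (Finset.sum_le_sum fun k _ => hvm' k)
  · intro j i hji
    have h1 := (Gbounds hlast hv i).1
    rw [sum_Iic_split (fun k => v k) hji.le] at h1
    refine h1.trans (add_le_add (Gbounds hlast hv j).2 ?_)
    exact Finset.sum_le_sum fun k _ => hvm' k

lemma Fcond.div (hn : 0 < n) (hβm : Monotone β) (hαβ : ∀ i, α i ≤ β i)
    (hlast : ∀ i : Fin n, (i : ℕ) = n - 1 → α i = d ∧ β i = d)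
    {m : Fin n →₀ ℕ} (h : Fcond d α β m) : Div d α β m := by
  classical
  set M : Fin n → ℕ := fun i => min (∑ k ∈ Iic i, m k)
      ((Iic i).inf' ⟨i, mem_Iic.2 le_rfl⟩ fun j => β j + ∑ k ∈ Ioc j i, m k) with hM
  have hMa : ∀ i, α i ≤ M i := by
    intro i
    refine le_min (h.1 i) (Finset.le_inf' _ _ ?_)
    intro j hj
    rcases (mem_Iic.1 hj).lt_or_eq with hji | rfl
    · exact h.2 j i hji
    · rw [Finset.Ioc_self, Finset.sum_empty, add_zero]
      exact hαβ _
  have hMb : ∀ i, M i ≤ β i := by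
    intro i
    refine (min_le_right _ _).trans ((Finset.inf'_le _ (mem_Iic.2 le_rfl)).trans ?_)
    rw [Finset.Ioc_self, Finset.sum_empty, add_zero]
  have hMmono : Monotone M := by
    intro i i' hii'
    refine le_min ((min_le_left _ _).trans (Finset.sum_le_sum_of_subset (Iic_subset_Iic.2 hii'))) ?_
    refine Finset.le_inf' _ _ fun j hj => ?_
    rcases le_or_gt j i with hji | hij
    · refine ((min_le_right _ _).trans (Finset.inf'_le _ (mem_Iic.2 hji))).trans ?_
      exact Nat.add_le_add_left (Finset.sum_le_sum_of_subset (Ioc_subset_Ioc le_rfl hii')) _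
    · exact (hMb i).trans ((hβm hij.le).trans (Nat.le_add_right _ _))
  have hMtop : ∀ i : Fin n, (i : ℕ) = n - 1 → M i = d := by
    intro i hi
    have h1 := hlast i hi
    exact le_antisymm ((hMb i).trans_eq h1.2) (h1.1 ▸ hMa i)
  have hMstep : ∀ i i' : Fin n, (i' : ℕ) = (i : ℕ) + 1 → M i' ≤ M i + m i' := by
    intro i i' hii'
    have hii'le : i ≤ i' := by rw [Fin.le_def]; omega
    have hni : i' ∉ Iic i := by rw [mem_Iic, Fin.le_def]; omega
    rcases le_total (∑ k ∈ Iic i, m k)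
        ((Iic i).inf' ⟨i, mem_Iic.2 le_rfl⟩ fun j => β j + ∑ k ∈ Ioc j i, m k) with hc | hc
    · have hMi : M i = ∑ k ∈ Iic i, m k := min_eq_left hc
      refine (min_le_left _ _).trans ?_
      rw [Iic_succ_insert hii', Finset.sum_insert hni, hMi, add_comm]
    · obtain ⟨j, hj, hMinf⟩ := Finset.exists_mem_eq_inf' ⟨i, mem_Iic.2 le_rfl⟩
        (fun j => β j + ∑ k ∈ Ioc j i, m k)
      have hMi : M i = β j + ∑ k ∈ Ioc j i, m k := by
        rw [hM]; simp only []
        rw [min_eq_right hc, hMinf]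
      have hji : j ≤ i := mem_Iic.1 hj
      have hnij : i' ∉ Ioc j i := by
        rw [mem_Ioc]; rintro ⟨-, hle⟩; rw [Fin.le_def] at hle; omega
      refine (min_le_right _ _).trans ((Finset.inf'_le _ (mem_Iic.2 (hji.trans hii'le))).trans ?_)
      rw [Ioc_succ_insert hii' hji, Finset.sum_insert hnij, hMi, add_comm (m i'), add_assoc]
  -- define the increments
  set Mn : ℕ → ℕ := fun k => if hk : k < n then M ⟨k, hk⟩ else d with hMn
  have hMnv : ∀ (k : ℕ) (hk : k < n), Mn k = M ⟨k, hk⟩ := by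
    intro k hk
    rw [hMn]
    exact dif_pos hk
  have hMnmono : ∀ k k' : ℕ, k ≤ k' → k' < n → Mn k ≤ Mn k' := by
    intro k k' hkk' hk'
    rw [hMnv k (lt_of_le_of_lt hkk' hk'), hMnv k' hk']
    exact hMmono (by rw [Fin.le_def]; simpa using hkk')
  set z : Fin n → ℕ := fun i => if (i : ℕ) = 0 then Mn 0 else Mn (i : ℕ) - Mn ((i : ℕ) - 1)
    with hz
  have hzv : ∀ i : Fin n, z i = if (i : ℕ) = 0 then Mn 0 else Mn (i : ℕ) - Mn ((i : ℕ) - 1) :=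
    fun i => rfl
  have hpsumN : ∀ k : ℕ, ∀ hk : k < n, ∑ j ∈ Iic (⟨k, hk⟩ : Fin n), z j = Mn k := by
    intro k
    induction k with
    | zero =>
      intro hk
      have hsing : Iic (⟨0, hk⟩ : Fin n) = {⟨0, hk⟩} := by
        ext x
        simp only [mem_Iic, mem_singleton, Fin.le_def, Fin.ext_iff]
        omega
      rw [hsing, Finset.sum_singleton, hzv]
      simp
    | succ k ih =>
      intro hk
      have hk' : k < n := by omega
      have hins : Iic (⟨k + 1, hk⟩ : Fin n) = insert ⟨k + 1, hk⟩ (Iic ⟨k, hk'⟩) :=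
        Iic_succ_insert rfl
      have hni : (⟨k + 1, hk⟩ : Fin n) ∉ Iic (⟨k, hk'⟩ : Fin n) := by
        simp only [mem_Iic, Fin.mk_le_mk]
        omega
      rw [hins, Finset.sum_insert hni, ih hk']
      have hzv1 : z ⟨k + 1, hk⟩ = Mn (k + 1) - Mn k := by
        rw [hzv]
        norm_num
      rw [hzv1]
      have hle : Mn k ≤ Mn (k + 1) := hMnmono k (k + 1) (by omega) hk
      omega
  have hpsum : ∀ i : Fin n, ∑ j ∈ Iic i, z j = Mn (i : ℕ) := by
    intro i
    have := hpsumN (i : ℕ) i.isLt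
    simpa using this
  have hzle : ∀ i, z i ≤ m i := by
    intro i
    rw [hzv]
    by_cases hi0 : (i : ℕ) = 0
    · rw [if_pos hi0]
      have hi : i = ⟨0, hn⟩ := by apply Fin.ext; simpa using hi0
      have hising : Iic i = {i} := by
        ext x
        simp only [mem_Iic, mem_singleton, Fin.le_def, Fin.ext_iff, hi]
        omega
      have hMle : M i ≤ m i := by
        refine (min_le_left _ _).trans ?_
        rw [hising, Finset.sum_singleton]
      rw [hMnv 0 hn, ← hi]
      exact hMle
    · rw [if_neg hi0]
      have hip : (i : ℕ) - 1 < n := by have := i.isLt; omega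
      have hstep := hMstep ⟨(i : ℕ) - 1, hip⟩ i (by simp; omega)
      rw [hMnv _ i.isLt, hMnv _ hip]
      simp only [Fin.eta]
      omega
  refine ⟨Finsupp.equivFunOnFinite.symm z, ⟨?_, ?_⟩, ?_⟩
  · show ∑ i, (Finsupp.equivFunOnFinite.symm z) i = d
    have hcoe : ∀ i, (Finsupp.equivFunOnFinite.symm z) i = z i := fun i => rfl
    simp only [hcoe]
    have htop : (univ : Finset (Fin n)) = Iic ⟨n - 1, by omega⟩ := univ_eq_Iic_top rfl
    rw [htop, hpsum]
    rw [hMnv _ (by omega : n - 1 < n)]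
    exact hMtop _ rfl
  · intro i _
    have hcoe : ∀ i, (Finsupp.equivFunOnFinite.symm z) i = z i := fun i => rfl
    simp only [hcoe]
    rw [hpsum, hMnv _ i.isLt, Fin.eta]
    exact ⟨hMa i, hMb i⟩
  · rw [Finsupp.le_def]
    intro i
    exact hzle i

lemma sum_single_indicator (x : Fin n) (s : Finset (Fin n)) :
    (∑ k ∈ s, (Finsupp.single x 1 : Fin n →₀ ℕ) k) = if x ∈ s then 1 else 0 := by
  classical
  simp only [Finsupp.single_apply]
  exact Finset.sum_ite_eq s x (fun _ => 1)

/-- The key combinatorial interpolation: divisibility at `a` and `c` implies it at any `b`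
between them. -/
lemma div_interval (hn : 0 < n) (hβm : Monotone β) (hαβ : ∀ i, α i ≤ β i)
    (hlast : ∀ i : Fin n, (i : ℕ) = n - 1 → α i = d ∧ β i = d)
    {u : Fin n →₀ ℕ} {a b c : Fin n} (hab : a < b) (hbc : b < c)
    (ha : Div d α β (u + Finsupp.single a 1)) (hc : Div d α β (u + Finsupp.single c 1)) :
    Div d α β (u + Finsupp.single b 1) := by
  have Fa := ha.fcond hlast
  have Fc := hc.fcond hlast
  refine Fcond.div hn hβm hαβ hlast ⟨?_, ?_⟩
  · intro i
    have hC := Fc.1 i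
    simp only [Finsupp.add_apply, Finset.sum_add_distrib, sum_single_indicator] at hC ⊢
    have hle : (if c ∈ Iic i then 1 else 0) ≤ (if b ∈ Iic i then (1:ℕ) else 0) := by
      by_cases h1 : c ∈ Iic i
      · rw [if_pos h1, if_pos (mem_Iic.2 (hbc.le.trans (mem_Iic.1 h1)))]
      · rw [if_neg h1]; exact Nat.zero_le _
    omega
  · intro j i hji
    have hA := Fa.2 j i hji
    have hC := Fc.2 j i hji
    simp only [Finsupp.add_apply, Finset.sum_add_distrib, sum_single_indicator] at hA hC ⊢
    by_cases hb : b ∈ Ioc j i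
    · rw [if_pos hb]
      have : (if a ∈ Ioc j i then (1:ℕ) else 0) ≤ 1 := by split_ifs <;> omega
      omega
    · rw [if_neg hb]
      rw [mem_Ioc] at hb
      push_neg at hb
      by_cases hjb : j < b
      · -- then ¬ b ≤ i, so i < b < c, hence c ∉ Ioc j i
        have hbi : ¬ b ≤ i := fun hbi => absurd (hb hjb) (not_lt.2 hbi)
        have hcni : c ∉ Ioc j i := by
          rw [mem_Ioc]
          rintro ⟨-, hci⟩
          exact hbi (hbc.le.trans hci)
        rw [if_neg hcni] at hC
        omega
      · -- b ≤ j, hence a < b ≤ j so a ∉ Ioc j i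
        have hani : a ∉ Ioc j i := by
          rw [mem_Ioc]
          rintro ⟨hja, -⟩
          exact hjb (hja.trans hab)
        rw [if_neg hani] at hA
        omega

end Comb

/-! ### Monomial ideal and lex-order lemmas -/

lemma monomial_one_prod (v : Fin n →₀ ℕ) :
    (monomial v (1 : K)) = ∏ i, X i ^ v i := by
  rw [monomial_eq, C_1, one_mul, Finsupp.prod_pow]

lemma mem_support_monomial_one {u u' : Fin n →₀ ℕ}
    (h : u' ∈ (monomial u (1 : K)).support) : u' = u := by
  classical
  rw [support_monomial, if_neg (one_ne_zero (α := K)), Finset.mem_singleton] at h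
  exact h

lemma coeff_top_mul (p q : MvPolynomial (Fin n) K) {w v : Fin n →₀ ℕ}
    (hw : ∀ x ∈ p.support, toLex x ≤ toLex w) (hv : ∀ y ∈ q.support, toLex y ≤ toLex v) :
    coeff (w + v) (p * q) = coeff w p * coeff v q := by
  have h := AddMonoidAlgebra.apply_add_of_supDegree_le
    (D := (toLex : (Fin n →₀ ℕ) → Lex (Fin n →₀ ℕ))) (p := p) (q := q)
    (fun a b => toLex_add a b) toLex.injective (Finset.sup_le hw) (Finset.sup_le hv)
  exact h

lemma pow_top_mem (I : Ideal (MvPolynomial (Fin n) K))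
    (Idiv : ∀ q ∈ I, ∀ u ∈ q.support, (monomial u (1 : K)) ∈ I)
    (p : MvPolynomial (Fin n) K) {w : Fin n →₀ ℕ} (hw : w ∈ p.support)
    (hwmax : ∀ x ∈ p.support, toLex x ≤ toLex w) :
    ∀ N (h : MvPolynomial (Fin n) K), h.support.card ≤ N → p * h ∈ I →
      ∃ M : ℕ, (monomial w (coeff w p)) ^ M * h ∈ I := by
  classical
  intro N
  induction N with
  | zero =>
    intro h hcard hph
    have h0 : h = 0 := by
      rw [Nat.le_zero, Finset.card_eq_zero, support_eq_empty] at hcard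
      exact hcard
    exact ⟨0, by simp [h0]⟩
  | succ N ih =>
    intro h hcard hph
    by_cases h0 : h = 0
    · exact ⟨0, by simp [h0]⟩
    obtain ⟨v, hv, hvmax⟩ := Finset.exists_max_image h.support toLex
      (support_nonempty.2 h0)
    set a := monomial w (coeff w p) with ha
    set c := coeff v h with hc
    have hco : coeff (w + v) (p * h) = coeff w p * c := coeff_top_mul p h hwmax hvmax
    have hne : coeff (w + v) (p * h) ≠ 0 := by
      rw [hco]
      exact mul_ne_zero (mem_support_iff.1 hw) (mem_support_iff.1 hv)
    have hmono : monomial (w + v) (1 : K) ∈ I := Idiv _ hph _ (mem_support_iff.2 hne)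
    have hterm : a * monomial v c ∈ I := by
      rw [ha, monomial_mul]
      have heq : monomial (w + v) (coeff w p * c) =
          C (coeff w p * c) * monomial (w + v) (1 : K) := by
        rw [C_mul_monomial, mul_one]
      rw [heq]
      exact Ideal.mul_mem_left _ _ hmono
    set h' := h - monomial v c with hh'
    have hsupp' : h'.support ⊆ h.support.erase v := by
      intro x hx
      rw [Finset.mem_erase]
      have hxne : coeff x h' ≠ 0 := mem_support_iff.1 hx
      constructor
      · rintro rfl
        apply hxne
        rw [hh', coeff_sub, coeff_monomial, if_pos rfl, hc, sub_self]
      · rw [mem_support_iff]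
        intro hxh
        apply hxne
        rw [hh', coeff_sub, hxh, coeff_monomial]
        split_ifs with he
        · subst he
          simp [hc, hxh]
        · simp
    have hcard'' : h'.support.card ≤ N := by
      have := Finset.card_le_card hsupp'
      have hvcard := Finset.card_erase_of_mem hv
      omega
    have hcardm : (a * h').support.card ≤ N := by
      have hsub : (a * h').support ⊆ {w} + h'.support := by
        refine (support_mul _ _).trans ?_
        apply Finset.add_subset_add_right
        rw [ha]
        classical
        rw [support_monomial]
        split_ifs
        · exact Finset.empty_subset _
        · exact Finset.Subset.refl _
      have hcard1 : ({w} + h'.support).card ≤ h'.support.card := by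
        rw [Finset.singleton_add]
        exact Finset.card_image_le
      exact ((Finset.card_le_card hsub).trans hcard1).trans hcard''
    have hph' : p * (a * h') ∈ I := by
      have heq : p * (a * h') = a * (p * h) - p * (a * monomial v c) := by
        rw [hh']; ring
      rw [heq]
      exact Ideal.sub_mem _ (Ideal.mul_mem_left _ _ hph) (Ideal.mul_mem_left _ _ hterm)
    obtain ⟨M, hM⟩ := ih (a * h') hcardm hph'
    refine ⟨M + 2, ?_⟩
    have hsplit : a ^ (M + 2) * h = a * (a ^ M * (a * h')) + a ^ (M + 1) * (a * monomial v c) := by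
      rw [hh']; ring
    rw [hsplit]
    exact Ideal.add_mem _ (Ideal.mul_mem_left _ _ hM) (Ideal.mul_mem_left _ _ hterm)

/-- Every element of an associated prime of a monomial ideal has all its monomials in the
prime. -/
lemma assoc_monomial_mem (I P : Ideal (MvPolynomial (Fin n) K))
    (Idiv : ∀ q ∈ I, ∀ u ∈ q.support, (monomial u (1 : K)) ∈ I)
    (hP : P.IsPrime) (f : MvPolynomial (Fin n) K)
    (hPf : ∀ g, g ∈ P ↔ g * f ∈ I) :
    ∀ p ∈ P, ∀ w ∈ p.support, monomial w (1 : K) ∈ P := by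
  classical
  suffices H : ∀ N : ℕ, ∀ p, p.support.card ≤ N → p ∈ P → ∀ w ∈ p.support,
      monomial w (1 : K) ∈ P by
    exact fun p hp w hw => H p.support.card p le_rfl hp w hw
  intro N
  induction N with
  | zero =>
    intro p hcard hp w hw
    rw [Nat.le_zero, Finset.card_eq_zero] at hcard
    rw [hcard] at hw
    exact absurd hw (Finset.notMem_empty w)
  | succ N ih =>
    intro p hcard hp w hw
    have hpne : p ≠ 0 := by
      rintro rfl
      simp at hw
    obtain ⟨w0, hw0, hw0max⟩ := Finset.exists_max_image p.support toLex
      (support_nonempty.2 hpne)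
    have hw0P : monomial w0 (1 : K) ∈ P := by
      have hpf : p * f ∈ I := (hPf p).1 hp
      obtain ⟨M, hM⟩ := pow_top_mem I Idiv p hw0 hw0max f.support.card f le_rfl hpf
      have hpow : (monomial w0 (coeff w0 p)) ^ M ∈ P := (hPf _).2 hM
      rw [monomial_pow] at hpow
      have h2 : monomial (M • w0) (1 : K) ∈ P := by
        have := Ideal.mul_mem_left P (C ((coeff w0 p) ^ M)⁻¹) hpow
        rwa [C_mul_monomial, inv_mul_cancel₀ (pow_ne_zero _ (mem_support_iff.1 hw0))] at this
      have h3 : (monomial w0 (1 : K)) ^ M ∈ P := by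
        rw [monomial_pow, one_pow]
        exact h2
      exact hP.mem_of_pow_mem M h3
    by_cases hww : w = w0
    · rwa [hww]
    · set p' := p - monomial w0 (coeff w0 p) with hp'
      have hp'P : p' ∈ P := by
        refine Ideal.sub_mem _ hp ?_
        have := Ideal.mul_mem_left P (C (coeff w0 p)) hw0P
        rwa [C_mul_monomial, mul_one] at this
      have hsupp' : p'.support ⊆ p.support.erase w0 := by
        intro x hx
        rw [Finset.mem_erase]
        have hxne : coeff x p' ≠ 0 := mem_support_iff.1 hx
        constructor
        · rintro rfl
          apply hxne
          rw [hp', coeff_sub, coeff_monomial, if_pos rfl, sub_self]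
        · rw [mem_support_iff]
          intro hxh
          apply hxne
          rw [hp', coeff_sub, hxh, coeff_monomial]
          split_ifs with he
          · subst he
            simp [hxh]
          · simp
      have hcard' : p'.support.card ≤ N := by
        have := Finset.card_le_card hsupp'
        have := Finset.card_erase_of_mem hw0
        omega
      have hwp' : w ∈ p'.support := by
        rw [mem_support_iff, hp', coeff_sub, coeff_monomial, if_neg (fun he => hww he.symm),
          sub_zero]
        exact mem_support_iff.1 hw
      exact ih p' hcard' hp'P w hwp'

lemma exists_var_mem {P : Ideal (MvPolynomial (Fin n) K)} (hP : P.IsPrime) {u : Fin n →₀ ℕ}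
    (hu : monomial u (1 : K) ∈ P) : ∃ i, u i ≠ 0 ∧ X i ∈ P := by
  rw [monomial_one_prod] at hu
  haveI := hP
  obtain ⟨i, -, hi⟩ := Ideal.IsPrime.prod_mem_iff.1 hu
  by_cases hui : u i = 0
  · rw [hui, pow_zero] at hi
    exact absurd ((Ideal.eq_top_iff_one P).2 hi) hP.ne_top
  · exact ⟨i, hui, hP.mem_of_pow_mem _ hi⟩

lemma monomial_eq_X_mul {u : Fin n →₀ ℕ} {i : Fin n} (hi : u i ≠ 0) (r : K) :
    monomial u r = X i * monomial (u - Finsupp.single i 1) r := by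
  have hle : Finsupp.single i 1 ≤ u := Finsupp.single_le_iff.2 (Nat.one_le_iff_ne_zero.2 hi)
  rw [X, monomial_mul, one_mul, add_tsub_cancel_of_le hle]

end LPaux

open LPaux

/-- every associated prime of an LP-polymatroidal ideal is a
monomial prime ideal `P_{[s,t]} = (x_s, …, x_t)` generated by consecutive
variables. -/
theorem LP_ass_interval {n : ℕ} (K : Type*) [Field K] (hn : 0 < n) {d : ℕ} (hd : 0 < d)
    (α β : Fin n → ℕ)
    (hαm : Monotone α) (hβm : Monotone β)
    (hlast : ∀ i : Fin n, (i : ℕ) = n - 1 → α i = d ∧ β i = d)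
    (hαβ : ∀ i, α i ≤ β i)
    (I : Ideal (MvPolynomial (Fin n) K))
    (hI : I = Ideal.span { m : MvPolynomial (Fin n) K | ∃ u : Fin n → ℕ,
      (∑ i, u i = d) ∧
      (∀ i : Fin n, (i : ℕ) < n - 1 →
        α i ≤ ∑ j ∈ Finset.Iic i, u j ∧ (∑ j ∈ Finset.Iic i, u j) ≤ β i) ∧
      m = ∏ i, (X i : MvPolynomial (Fin n) K) ^ u i }) :
    ∀ P ∈ associatedPrimes (MvPolynomial (Fin n) K) (MvPolynomial (Fin n) K ⧸ I),
      ∃ s t : Fin n, s ≤ t ∧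
        P = Ideal.span
          ((fun i => (X i : MvPolynomial (Fin n) K)) '' { i : Fin n | s ≤ i ∧ i ≤ t }) := by
  classical
  -- rewrite the generating set
  have hset : { m : MvPolynomial (Fin n) K | ∃ u : Fin n → ℕ,
      (∑ i, u i = d) ∧
      (∀ i : Fin n, (i : ℕ) < n - 1 →
        α i ≤ ∑ j ∈ Finset.Iic i, u j ∧ (∑ j ∈ Finset.Iic i, u j) ≤ β i) ∧
      m = ∏ i, (X i : MvPolynomial (Fin n) K) ^ u i } =
      (fun s => monomial s (1 : K)) '' Gset d α β := by
    ext q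
    constructor
    · rintro ⟨u, h1, h2, rfl⟩
      refine ⟨Finsupp.equivFunOnFinite.symm u, ⟨?_, ?_⟩, ?_⟩
      · show ∑ i, (Finsupp.equivFunOnFinite.symm u) i = d
        have hcoe : ∀ i, (Finsupp.equivFunOnFinite.symm u) i = u i := fun i => rfl
        simp only [hcoe]; exact h1
      · intro i hi
        have hcoe : ∀ i, (Finsupp.equivFunOnFinite.symm u) i = u i := fun i => rfl
        simp only [hcoe]; exact h2 i hi
      · show monomial (Finsupp.equivFunOnFinite.symm u) (1 : K) = _
        rw [monomial_one_prod]
        exact Finset.prod_congr rfl fun i _ => rfl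
    · rintro ⟨v, ⟨h1, h2⟩, rfl⟩
      exact ⟨fun i => v i, h1, h2, monomial_one_prod v⟩
  have memI : ∀ q : MvPolynomial (Fin n) K, q ∈ I ↔ ∀ u ∈ q.support, Div d α β u := by
    intro q
    rw [hI, hset, mem_ideal_span_monomial_image]
    rfl
  have Idiv : ∀ q ∈ I, ∀ u ∈ q.support, (monomial u (1 : K)) ∈ I := by
    intro q hq u hu
    rw [memI]
    intro u' hu'
    have huu : u' = u := mem_support_monomial_one hu'
    rw [huu]
    exact (memI q).1 hq u hu
  intro P hPass
  obtain ⟨hP, x, hx⟩ := isAssociatedPrime_iff.1 hPass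
  obtain ⟨f, rfl⟩ := Ideal.Quotient.mk_surjective x
  have hPf : ∀ g, g ∈ P ↔ g * f ∈ I := by
    intro g
    rw [hx, Submodule.mem_colon_singleton, Submodule.mem_bot]
    have hsmul : g • (Ideal.Quotient.mk I f) = Ideal.Quotient.mk I (g * f) := by
      rw [← Ideal.Quotient.mk_eq_mk, ← Ideal.Quotient.mk_eq_mk, ← Submodule.Quotient.mk_smul,
        smul_eq_mul]
    rw [hsmul, Ideal.Quotient.eq_zero_iff_mem]
  have hMONO := assoc_monomial_mem I P Idiv hP f hPf
  -- the set of variables in P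
  set A : Finset (Fin n) := univ.filter (fun i => X i ∈ P) with hA
  -- A is nonempty
  have hGne : Div d α β (Finsupp.equivFunOnFinite.symm (fun _ => d)) := by
    refine Fcond.div hn hβm hαβ hlast ⟨?_, ?_⟩
    · intro i
      have hcoe : ∀ j, (Finsupp.equivFunOnFinite.symm (fun _ => d) : Fin n →₀ ℕ) j = d :=
        fun j => rfl
      simp only [hcoe, Finset.sum_const, smul_eq_mul]
      have h1 : 1 ≤ (Iic i).card := Finset.card_pos.2 ⟨i, mem_Iic.2 le_rfl⟩
      have h2 : α i ≤ d := (hαβ i).trans ((hβm (show i ≤ ⟨n-1, by omega⟩ by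
        rw [Fin.le_def]; have := i.isLt; simp; omega)).trans_eq (hlast ⟨n-1, by omega⟩ rfl).2)
      calc α i ≤ d := h2
        _ ≤ (Iic i).card * d := Nat.le_mul_of_pos_left d (by omega)
    · intro j i hji
      have hcoe : ∀ j, (Finsupp.equivFunOnFinite.symm (fun _ => d) : Fin n →₀ ℕ) j = d :=
        fun j => rfl
      simp only [hcoe, Finset.sum_const, smul_eq_mul]
      have h1 : 1 ≤ (Ioc j i).card := Finset.card_pos.2 ⟨i, mem_Ioc.2 ⟨hji, le_rfl⟩⟩
      have h2 : α i ≤ d := (hαβ i).trans ((hβm (show i ≤ ⟨n-1, by omega⟩ by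
        rw [Fin.le_def]; have := i.isLt; simp; omega)).trans_eq (hlast ⟨n-1, by omega⟩ rfl).2)
      calc α i ≤ d := h2
        _ ≤ (Ioc j i).card * d := Nat.le_mul_of_pos_left d (by omega)
        _ ≤ β j + (Ioc j i).card * d := Nat.le_add_left _ _
  obtain ⟨v0, hv0, -⟩ := hGne
  have hv0I : monomial v0 (1 : K) ∈ I := by
    rw [memI]
    intro u hu
    have huu : u = v0 := mem_support_monomial_one hu
    rw [huu]
    exact ⟨v0, hv0, le_rfl⟩
  have hv0P : monomial v0 (1 : K) ∈ P := (hPf _).2 (Ideal.mul_mem_right f I hv0I)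
  obtain ⟨i0, -, hi0⟩ := exists_var_mem hP hv0P
  have hAne : A.Nonempty := ⟨i0, by simp [hA, hi0]⟩
  set s := A.min' hAne with hs
  set t := A.max' hAne with ht
  have hsA : X s ∈ P := (Finset.mem_filter.1 (A.min'_mem hAne)).2
  have htA : X t ∈ P := (Finset.mem_filter.1 (A.max'_mem hAne)).2
  have hst : s ≤ t := A.min'_le _ (A.max'_mem hAne)
  refine ⟨s, t, hst, ?_⟩
  -- X b ∈ P for all b in [s,t]
  have hmid : ∀ b : Fin n, s ≤ b → b ≤ t → X b ∈ P := by
    intro b hsb hbt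
    rcases eq_or_lt_of_le hsb with rfl | hsb'
    · exact hsA
    rcases eq_or_lt_of_le hbt with rfl | hbt'
    · exact htA
    rw [hPf, memI]
    intro w hw
    rw [support_X_mul, Finset.mem_map] at hw
    obtain ⟨u, hu, rfl⟩ := hw
    rw [addLeftEmbedding_apply]
    have hDs : Div d α β (u + Finsupp.single s 1) := by
      have hXsf : X s * f ∈ I := (hPf _).1 hsA
      have := (memI _).1 hXsf (Finsupp.single s 1 + u)
        (by rw [support_X_mul, Finset.mem_map]
            exact ⟨u, hu, addLeftEmbedding_apply _ _⟩)
      rwa [add_comm] at this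
    have hDt : Div d α β (u + Finsupp.single t 1) := by
      have hXtf : X t * f ∈ I := (hPf _).1 htA
      have := (memI _).1 hXtf (Finsupp.single t 1 + u)
        (by rw [support_X_mul, Finset.mem_map]
            exact ⟨u, hu, addLeftEmbedding_apply _ _⟩)
      rwa [add_comm] at this
    have := div_interval hn hβm hαβ hlast hsb' hbt' hDs hDt
    rwa [add_comm] at this
  apply le_antisymm
  · intro p hp
    have hsum : ∑ v ∈ p.support, monomial v (coeff v p) ∈
        Ideal.span ((fun i => (X i : MvPolynomial (Fin n) K)) '' { i : Fin n | s ≤ i ∧ i ≤ t }) := by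
      refine Submodule.sum_mem _ fun u hu => ?_
      have hu1 : monomial u (1 : K) ∈ P := hMONO p hp u hu
      obtain ⟨i, hui, hXi⟩ := exists_var_mem hP hu1
      have hiA : i ∈ A := by simp [hA, hXi]
      have hsi : s ≤ i := A.min'_le _ hiA
      have hit : i ≤ t := A.le_max' _ hiA
      rw [monomial_eq_X_mul hui]
      exact Ideal.mul_mem_right _ _ (Ideal.subset_span ⟨i, ⟨hsi, hit⟩, rfl⟩)
    rwa [support_sum_monomial_coeff] at hsum
  · rw [Ideal.span_le]
    rintro q ⟨i, ⟨h1, h2⟩, rfl⟩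
    exact hmid i h1 h2
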